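/- There exists a (unique) group homomorphism φ : W → (ZMod 2) × (ZMod 2) with φ(s₁) = (1,0), φ(s₂) = (0,1), φ(s₃) = (1,0) and φ(s₄) = (1,1); this φ is surjective, and its kernel is isomorphic to the Klein bottle group K. -/

import Mathlib

/-- The Coxeter matrix of the 4-cycle: off-diagonal entries are `2` for cyclically adjacent
indices and `0` (i.e. `∞`) for the two opposite pairs. -/
def C4 : CoxeterMatrix (Fin 4) where
  M := Matrix.of fun i j : Fin 4 ↦
    if i = j then 1
    else if (i.val + 1) % 4 = j.val ∨ (j.val + 1) % 4 = i.val then 2 else 0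
  off_diagonal := by simp only [Matrix.of_apply]; decide

/-- `W`, the right-angled Coxeter group of the 4-cycle. -/
abbrev W : Type := C4.Group

/-- The simple reflections `s₁, s₂, s₃, s₄` of `W`, indexed by `Fin 4`
(so `s 0 = s₁`, `s 1 = s₂`, `s 2 = s₃`, `s 3 = s₄`). -/
def s (i : Fin 4) : W := C4.simple i

/-- The single relator `a·b·a·b⁻¹` of the Klein bottle group, on two generators
`a = FreeGroup.of 0`, `b = FreeGroup.of 1`. -/
def kleinRels : Set (FreeGroup (Fin 2)) :=
  {FreeGroup.of 0 * FreeGroup.of 1 * FreeGroup.of 0 * (FreeGroup.of 1)⁻¹}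

/-- The Klein bottle group `K = ⟨a, b ∣ a·b·a·b⁻¹ = 1⟩`. -/
abbrev K : Type := PresentedGroup kleinRels

def cs : CoxeterSystem C4 W := C4.toCoxeterSystem


lemma ss (i : Fin 4) : s i * s i = 1 := cs.simple_mul_simple_self i
lemma s_inv (i : Fin 4) : (s i)⁻¹ = s i := cs.inv_simple i
lemma ss' (i : Fin 4) (w : W) : s i * (s i * w) = w := by rw [← mul_assoc, ss, one_mul]

lemma wswap (i j : Fin 4) (h : C4.M i j = 2) : s i * s j = s j * s i := by
  have h2 := cs.simple_mul_simple_pow i j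
  rw [h, pow_two] at h2
  have h3 : s i * s j = (s i * s j)⁻¹ := eq_inv_of_mul_eq_one_left h2
  rw [h3, mul_inv_rev, s_inv, s_inv]

lemma sc10 : s 1 * s 0 = s 0 * s 1 := wswap 1 0 rfl

lemma sc10' (w : W) : s 1 * (s 0 * w) = s 0 * (s 1 * w) := by rw [← mul_assoc, sc10, mul_assoc]
lemma sc12 : s 1 * s 2 = s 2 * s 1 := wswap 1 2 rfl
lemma sc12' (w : W) : s 1 * (s 2 * w) = s 2 * (s 1 * w) := by rw [← mul_assoc, sc12, mul_assoc]
lemma sc30 : s 3 * s 0 = s 0 * s 3 := wswap 3 0 rfl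
lemma sc30' (w : W) : s 3 * (s 0 * w) = s 0 * (s 3 * w) := by rw [← mul_assoc, sc30, mul_assoc]
lemma sc32 : s 3 * s 2 = s 2 * s 3 := wswap 3 2 rfl
lemma sc32' (w : W) : s 3 * (s 2 * w) = s 2 * (s 3 * w) := by rw [← mul_assoc, sc32, mul_assoc]

def aw : W := s 0 * s 2
def bw : W := s 0 * (s 1 * s 3)

lemma hab : aw * bw * aw * bw⁻¹ = 1 := by
  simp [aw, bw, mul_assoc, one_mul, mul_one, inv_one, mul_inv_rev, s_inv, ss, ss',
    sc10, sc10', sc12, sc12', sc30, sc30', sc32, sc32']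

abbrev M2 := Multiplicative (ZMod 2 × ZMod 2)

def fphi : Fin 4 → M2 :=
  ![Multiplicative.ofAdd (1, 0), Multiplicative.ofAdd (0, 1),
    Multiplicative.ofAdd (1, 0), Multiplicative.ofAdd (1, 1)]

lemma hfphi : C4.IsLiftable fphi := by
  intro i j
  revert i j
  decide

def phi0 : W →* M2 := cs.lift ⟨fphi, hfphi⟩

lemma phi0_s (i : Fin 4) : phi0 (s i) = fphi i := cs.lift_apply_simple hfphi i


def ka : K := PresentedGroup.of 0
def kb : K := PresentedGroup.of 1

lemma k_rel : ka * kb * ka * kb⁻¹ = 1 := by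
  have h1 : ka * kb * ka * kb⁻¹ = PresentedGroup.mk kleinRels
      (FreeGroup.of 0 * FreeGroup.of 1 * FreeGroup.of 0 * (FreeGroup.of 1)⁻¹) := by
    simp [ka, kb, PresentedGroup.of, map_mul, map_inv]
  rw [h1]
  exact (QuotientGroup.eq_one_iff _).mpr
    (Subgroup.subset_normalClosure (by simp [kleinRels]))

lemma k_conj1 : kb * ka * kb⁻¹ = ka⁻¹ := by
  have h2 : ka * (kb * ka * kb⁻¹) = 1 := by rw [← k_rel]; group
  rw [eq_comm, inv_eq_of_mul_eq_one_right h2]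

lemma k_zconj (n : ℤ) : kb * ka ^ n * kb⁻¹ = ka ^ (-n) := by
  have h : (MulAut.conj kb) ka = ka⁻¹ := by simpa [MulAut.conj_apply] using k_conj1
  calc kb * ka ^ n * kb⁻¹ = (MulAut.conj kb) (ka ^ n) := by simp [MulAut.conj_apply]
    _ = ((MulAut.conj kb) ka) ^ n := map_zpow _ _ _
    _ = ka ^ (-n) := by rw [h, inv_zpow, zpow_neg]

lemma k_conj2 : kb⁻¹ * ka * kb = ka⁻¹ := by
  have h3 : kb * ka⁻¹ * kb⁻¹ = ka := by
    rw [show kb * ka⁻¹ * kb⁻¹ = (kb * ka * kb⁻¹)⁻¹ from by group, k_conj1, inv_inv]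
  calc kb⁻¹ * ka * kb = kb⁻¹ * (kb * ka⁻¹ * kb⁻¹) * kb := by rw [h3]
    _ = ka⁻¹ := by group

lemma k_zconj2 (n : ℤ) : kb⁻¹ * ka ^ n * kb = ka ^ (-n) := by
  have h : (MulAut.conj kb⁻¹) ka = ka⁻¹ := by simpa [MulAut.conj_apply] using k_conj2
  calc kb⁻¹ * ka ^ n * kb = (MulAut.conj kb⁻¹) (ka ^ n) := by simp [MulAut.conj_apply]
    _ = ((MulAut.conj kb⁻¹) ka) ^ n := map_zpow _ _ _
    _ = ka ^ (-n) := by rw [h, inv_zpow, zpow_neg]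

lemma k_pow_mul (n : ℤ) : ka ^ n * kb = kb * ka ^ (-n) := by
  calc ka ^ n * kb = kb * (kb⁻¹ * ka ^ n * kb) := by group
    _ = kb * ka ^ (-n) := by rw [k_zconj2 n]

lemma k_pow_mul_inv (n : ℤ) : ka ^ n * kb⁻¹ = kb⁻¹ * ka ^ (-n) := by
  calc ka ^ n * kb⁻¹ = kb⁻¹ * (kb * ka ^ n * kb⁻¹) := by group
    _ = kb⁻¹ * ka ^ (-n) := by rw [k_zconj n]

lemma k_nf (k : K) : ∃ m n : ℤ, k = kb ^ m * ka ^ n := by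
  have hk : k ∈ Subgroup.closure (Set.range (PresentedGroup.of : Fin 2 → K)) := by
    rw [PresentedGroup.closure_range_of]; trivial
  induction hk using Subgroup.closure_induction_right with
  | one => exact ⟨0, 0, by simp⟩
  | mul_right x hx y hy ih =>
    obtain ⟨m, n, rfl⟩ := ih
    obtain ⟨i, rfl⟩ := hy
    rcases (show i = 0 ∨ i = 1 from by revert i; decide) with rfl | rfl
    · exact ⟨m, n + 1, by rw [zpow_add_one, ← mul_assoc]; rfl⟩
    · refine ⟨m + 1, -n, ?_⟩
      show kb ^ m * ka ^ n * PresentedGroup.of 1 = _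
      rw [mul_assoc, show (PresentedGroup.of 1 : K) = kb from rfl, k_pow_mul,
        ← mul_assoc, ← zpow_add_one]
  | mul_inv_cancel x hx y hy ih =>
    obtain ⟨m, n, rfl⟩ := ih
    obtain ⟨i, rfl⟩ := hy
    rcases (show i = 0 ∨ i = 1 from by revert i; decide) with rfl | rfl
    · exact ⟨m, n - 1, by rw [zpow_sub_one, ← mul_assoc]; rfl⟩
    · refine ⟨m - 1, -n, ?_⟩
      show kb ^ m * ka ^ n * (PresentedGroup.of 1)⁻¹ = _
      rw [mul_assoc, show (PresentedGroup.of 1 : K) = kb from rfl, k_pow_mul_inv,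
        ← mul_assoc, ← zpow_sub_one]

def rP : Equiv.Perm ℤ := Function.Involutive.toPerm (fun x => -x) (fun x => by ring)
def qP : Equiv.Perm ℤ := Function.Involutive.toPerm (fun x => 1 - x) (fun x => by ring)

lemma rP_apply (x : ℤ) : rP x = -x := rfl
lemma qP_apply (x : ℤ) : qP x = 1 - x := rfl
lemma rP2 : rP * rP = 1 := Equiv.ext fun x => by
  simp [Equiv.Perm.mul_apply, rP_apply]
lemma qP2 : qP * qP = 1 := Equiv.ext fun x => by
  simp [Equiv.Perm.mul_apply, qP_apply]

def ftau : Fin 4 → Equiv.Perm ℤ × Equiv.Perm ℤ :=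
  ![(rP, 1), (1, rP), (qP, 1), (1, qP)]

lemma hftau : C4.IsLiftable ftau := by
  intro i j
  rcases (show i = 0 ∨ i = 1 ∨ i = 2 ∨ i = 3 from by revert i; decide) with rfl | rfl | rfl | rfl <;>
    rcases (show j = 0 ∨ j = 1 ∨ j = 2 ∨ j = 3 from by revert j; decide) with rfl | rfl | rfl | rfl <;>
      simp [C4, ftau, pow_succ, pow_zero, Prod.mk_mul_mk, one_mul, mul_one, rP2, qP2,
        Prod.mk_eq_one] <;>
      exact fun h => absurd h (by decide)

def tau : W →* Equiv.Perm ℤ × Equiv.Perm ℤ := cs.lift ⟨ftau, hftau⟩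

lemma tau_s (i : Fin 4) : tau (s i) = ftau i := cs.lift_apply_simple hftau i

lemma tau_aw : tau aw = (rP * qP, 1) := by
  rw [aw, map_mul, tau_s, tau_s]
  show ((rP, 1) : _ × _) * (qP, 1) = _
  rw [Prod.mk_mul_mk, mul_one]

lemma tau_bw : tau bw = (rP, rP * qP) := by
  rw [bw, map_mul, map_mul, tau_s, tau_s, tau_s]
  show ((rP, 1) : _ × _) * ((1, rP) * (1, qP)) = _
  rw [Prod.mk_mul_mk, Prod.mk_mul_mk]
  simp

lemma rq_apply (x : ℤ) : (rP * qP) x = x - 1 := by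
  show rP (qP x) = x - 1
  rw [rP_apply, qP_apply]; ring

lemma rq_inv_apply (x : ℤ) : (rP * qP)⁻¹ x = x + 1 :=
  ((Equiv.Perm.eq_inv_iff_eq (f := rP * qP)).mpr (by rw [rq_apply]; ring)).symm

lemma rq_zpow (n : ℤ) (x : ℤ) : ((rP * qP) ^ n) x = x - n := by
  induction n using Int.induction_on generalizing x with
  | zero => simp
  | succ k ih =>
    have h : ((rP * qP) ^ ((k : ℤ) + 1)) x = ((rP * qP) ^ (k : ℤ)) ((rP * qP) x) := by
      rw [zpow_add_one]; rfl
    rw [h, rq_apply, ih]; push_cast; ring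
  | pred k ih =>
    have h : ((rP * qP) ^ (-(k : ℤ) - 1)) x = ((rP * qP) ^ (-(k : ℤ))) ((rP * qP)⁻¹ x) := by
      rw [zpow_sub_one]; rfl
    rw [h, rq_inv_apply, ih]; push_cast; ring

def fpsi : Fin 2 → W := ![aw, bw]

lemma hpsi : ∀ r ∈ kleinRels, FreeGroup.lift fpsi r = 1 := by
  intro r hr
  rw [kleinRels, Set.mem_singleton_iff] at hr
  subst hr
  have : FreeGroup.lift fpsi
      (FreeGroup.of 0 * FreeGroup.of 1 * FreeGroup.of 0 * (FreeGroup.of 1)⁻¹) =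
      aw * bw * aw * bw⁻¹ := by
    rw [map_mul, map_mul, map_inv, map_mul]
    simp [fpsi]
  rw [this, hab]

def psi : K →* W := PresentedGroup.toGroup hpsi

lemma psi_ka : psi ka = aw := by
  have h := PresentedGroup.toGroup.of hpsi (x := (0 : Fin 2))
  simpa [psi, ka, kb, fpsi] using h

lemma psi_kb : psi kb = bw := by
  have h := PresentedGroup.toGroup.of hpsi (x := (1 : Fin 2))
  simpa [psi, ka, kb, fpsi] using h

lemma psi_eq_one_iff (k : K) (hk : psi k = 1) : k = 1 := by
  obtain ⟨m, n, rfl⟩ := k_nf k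
  have h2 : tau (psi (kb ^ m * ka ^ n)) = 1 := by rw [hk, map_one]
  rw [map_mul, map_zpow, map_zpow, psi_ka, psi_kb, map_mul, map_zpow, map_zpow,
    tau_aw, tau_bw] at h2
  have h3 : ((rP, rP * qP) : _ × _) ^ m = (rP ^ m, (rP * qP) ^ m) :=
    Prod.ext (by simp) (by simp)
  have h4 : ((rP * qP, 1) : Equiv.Perm ℤ × Equiv.Perm ℤ) ^ n = ((rP * qP) ^ n, 1) :=
    Prod.ext (by simp) (by simp)
  rw [h3, h4, Prod.mk_mul_mk, Prod.mk_eq_one] at h2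
  obtain ⟨hfst, hsnd⟩ := h2
  rw [mul_one] at hsnd
  have hm : m = 0 := by
    have h5 := Equiv.ext_iff.mp hsnd 0
    rw [rq_zpow] at h5
    simp only [Equiv.Perm.one_apply] at h5
    omega
  subst hm
  rw [zpow_zero, one_mul] at hfst
  have hn : n = 0 := by
    have h5 := Equiv.ext_iff.mp hfst 0
    rw [rq_zpow] at h5
    simp only [Equiv.Perm.one_apply] at h5
    omega
  subst hn
  simp

lemma psi_inj : Function.Injective psi := by
  intro x y hxy
  have h : psi (x * y⁻¹) = 1 := by rw [map_mul, map_inv, hxy, mul_inv_cancel]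
  have h0 := psi_eq_one_iff _ h
  rwa [mul_inv_eq_one] at h0

def Hgrp : Subgroup W := Subgroup.closure {aw, bw}

lemma memAw : aw ∈ Hgrp := Subgroup.subset_closure (by simp)
lemma memBw : bw ∈ Hgrp := Subgroup.subset_closure (by simp)
lemma memA : s 0 * s 2 ∈ Hgrp := memAw
lemma memB : s 0 * (s 1 * s 3) ∈ Hgrp := memBw
lemma memA' : s 2 * s 0 ∈ Hgrp := by
  have h := inv_mem memAw
  rwa [aw, mul_inv_rev, s_inv, s_inv] at h
lemma memB' : s 0 * (s 3 * s 1) ∈ Hgrp := by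
  have h := inv_mem memBw
  have e : bw⁻¹ = s 0 * (s 3 * s 1) := by
    rw [bw]
    simp [mul_assoc, mul_inv_rev, s_inv, sc10, sc10', sc12, sc12', sc30, sc30', sc32, sc32']
  rwa [e] at h

def rep (g : M2) : W :=
  if g = Multiplicative.ofAdd (1, 0) then s 0
  else if g = Multiplicative.ofAdd (0, 1) then s 1
  else if g = Multiplicative.ofAdd (1, 1) then s 0 * s 1
  else 1

lemma rep_00 : rep (Multiplicative.ofAdd (0, 0)) = 1 := by
  rw [rep, if_neg (by decide), if_neg (by decide), if_neg (by decide)]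
lemma rep_one : rep (1 : M2) = 1 := rep_00
lemma rep_10 : rep (Multiplicative.ofAdd (1, 0)) = s 0 := by rw [rep, if_pos rfl]
lemma rep_01 : rep (Multiplicative.ofAdd (0, 1)) = s 1 := by
  rw [rep, if_neg (by decide), if_pos rfl]
lemma rep_11 : rep (Multiplicative.ofAdd (1, 1)) = s 0 * s 1 := by
  rw [rep, if_neg (by decide), if_neg (by decide), if_pos rfl]

lemma mulofAdd (u v : ZMod 2 × ZMod 2) :
    (Multiplicative.ofAdd u) * (Multiplicative.ofAdd v) = Multiplicative.ofAdd (u + v) := rfl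

lemma z11 : (1 : ZMod 2) + 1 = 0 := by decide

lemma key (φ : W →* M2) (h0 : φ (s 0) = Multiplicative.ofAdd (1, 0))
    (h1 : φ (s 1) = Multiplicative.ofAdd (0, 1))
    (h2 : φ (s 2) = Multiplicative.ofAdd (1, 0))
    (h3 : φ (s 3) = Multiplicative.ofAdd (1, 1)) (w : W) :
    w * (rep (φ w))⁻¹ ∈ Hgrp := by
  refine cs.simple_induction_right (p := fun w => w * (rep (φ w))⁻¹ ∈ Hgrp) w ?_ ?_
  · show (1 : W) * (rep (φ 1))⁻¹ ∈ Hgrp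
    rw [map_one, rep_one, inv_one, one_mul]
    exact one_mem _
  · intro w i ih
    show w * s i * (rep (φ (w * s i)))⁻¹ ∈ Hgrp
    replace ih : w * (rep (φ w))⁻¹ ∈ Hgrp := ih
    have hicases : i = 0 ∨ i = 1 ∨ i = 2 ∨ i = 3 := by revert i; decide
    have step : (w * s i) * (rep (φ (w * s i)))⁻¹ =
        (w * (rep (φ w))⁻¹) * ((rep (φ w)) * ((s i) * (rep (φ (w * s i)))⁻¹)) := by group
    rw [step]
    refine mul_mem ih ?_
    have hgcases : φ w = Multiplicative.ofAdd (0, 0) ∨ φ w = Multiplicative.ofAdd (1, 0) ∨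
        φ w = Multiplicative.ofAdd (0, 1) ∨ φ w = Multiplicative.ofAdd (1, 1) := by
      generalize φ w = z; revert z; decide
    rcases hicases with rfl | rfl | rfl | rfl <;>
      rw [map_mul] <;>
      [rw [h0]; rw [h1]; rw [h2]; rw [h3]] <;>
      rcases hgcases with hg | hg | hg | hg <;>
      rw [hg, mulofAdd] <;>
      simp only [Prod.mk_add_mk, zero_add, add_zero, z11] <;>
      simp only [rep_00, rep_10, rep_01, rep_11] <;>
      simp [mul_assoc, one_mul, mul_one, inv_one, mul_inv_rev, s_inv, ss, ss',
        sc10, sc10', sc12, sc12', sc30, sc30', sc32, sc32'] <;>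
      first
        | exact one_mem _
        | exact memA
        | exact memA'
        | exact memB
        | exact memB'


/-- There is a unique group homomorphism `φ : W → (ZMod 2) × (ZMod 2)` with `φ(s₁) = (1,0)`,
`φ(s₂) = (0,1)`, `φ(s₃) = (1,0)`, `φ(s₄) = (1,1)`; it is surjective and its kernel is
isomorphic to the Klein bottle group `K`. -/
theorem stmt4 :
    (∃! φ : W →* Multiplicative (ZMod 2 × ZMod 2),
      φ (s 0) = Multiplicative.ofAdd (1, 0) ∧ φ (s 1) = Multiplicative.ofAdd (0, 1) ∧
      φ (s 2) = Multiplicative.ofAdd (1, 0) ∧ φ (s 3) = Multiplicative.ofAdd (1, 1)) ∧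
    ∀ φ : W →* Multiplicative (ZMod 2 × ZMod 2),
      (φ (s 0) = Multiplicative.ofAdd (1, 0) ∧ φ (s 1) = Multiplicative.ofAdd (0, 1) ∧
       φ (s 2) = Multiplicative.ofAdd (1, 0) ∧ φ (s 3) = Multiplicative.ofAdd (1, 1)) →
      Function.Surjective φ ∧ Nonempty (φ.ker ≃* K) := by
  constructor
  · refine ⟨phi0, ⟨phi0_s 0, phi0_s 1, phi0_s 2, phi0_s 3⟩, ?_⟩
    rintro φ' ⟨g0, g1, g2, g3⟩
    refine cs.ext_simple fun i => ?_
    rcases (show i = 0 ∨ i = 1 ∨ i = 2 ∨ i = 3 from by revert i; decide) with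
      rfl | rfl | rfl | rfl
    · rw [show cs.simple 0 = s 0 from rfl, g0]; exact (phi0_s 0).symm
    · rw [show cs.simple 1 = s 1 from rfl, g1]; exact (phi0_s 1).symm
    · rw [show cs.simple 2 = s 2 from rfl, g2]; exact (phi0_s 2).symm
    · rw [show cs.simple 3 = s 3 from rfl, g3]; exact (phi0_s 3).symm
  · rintro φ ⟨h0, h1, h2, h3⟩
    have haw : φ aw = 1 := by rw [aw, map_mul, h0, h2]; decide
    have hbw : φ bw = 1 := by rw [bw, map_mul, map_mul, h0, h1, h3]; decide
    constructor
    · intro g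
      rcases (show g = Multiplicative.ofAdd (0, 0) ∨ g = Multiplicative.ofAdd (1, 0) ∨
          g = Multiplicative.ofAdd (0, 1) ∨ g = Multiplicative.ofAdd (1, 1) from by
            revert g; decide) with rfl | rfl | rfl | rfl
      · exact ⟨1, by rw [map_one]; decide⟩
      · exact ⟨s 0, h0⟩
      · exact ⟨s 1, h1⟩
      · exact ⟨s 0 * s 1, by rw [map_mul, h0, h1]; decide⟩
    · have hker : ∀ k : K, psi k ∈ φ.ker := by
        intro k
        obtain ⟨m, n, rfl⟩ := k_nf k
        rw [MonoidHom.mem_ker, map_mul, map_zpow, map_zpow, psi_ka, psi_kb,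
          map_mul, map_zpow, map_zpow, haw, hbw]
        simp
      let ψ' : K →* φ.ker := psi.codRestrict φ.ker hker
      have hinj : Function.Injective ψ' := by
        intro x y hxy
        apply psi_inj
        have := congrArg (Subtype.val) hxy
        exact this
      have hsurj : Function.Surjective ψ' := by
        rintro ⟨x, hx⟩
        have hx' : φ x = 1 := MonoidHom.mem_ker.mp hx
        have hk := key φ h0 h1 h2 h3 x
        rw [hx', rep_one, inv_one, mul_one] at hk
        have hle : Hgrp ≤ psi.range := by
          rw [Hgrp]
          refine (Subgroup.closure_le _).mpr ?_
          rintro z (rfl | rfl)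
          exacts [⟨ka, psi_ka⟩, ⟨kb, psi_kb⟩]
        obtain ⟨k, hk2⟩ := hle hk
        exact ⟨k, Subtype.ext hk2⟩
      exact ⟨(MulEquiv.ofBijective ψ' ⟨hinj, hsurj⟩).symm⟩
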